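/- Let A be a substochastic matrix. Then the index of contraction of A equals the infimum of all n ∈ ℕ₀ such that ‖A^{n+1}‖_∞ < 1. In particular, the index of contraction of A is finite if and only if the spectral radius ρ(A) < 1. -/
import Mathlib


open scoped ENNReal NNReal

/-- `A` is (right) substochastic: entrywise nonnegative with row sums at most one. -/
def IsSubstochastic {N : ℕ} (A : Matrix (Fin N) (Fin N) ℝ) : Prop :=
  (∀ i j, 0 ≤ A i j) ∧ ∀ i, ∑ j, A i j ≤ 1

/-- There is a walk of length `m` (i.e. with `m` edges) in the directed graph of `A`
(an edge `(i,j)` iff `A i j ≠ 0`) from row `i` to a row whose sum is strictly less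
than one (a "non-trouble" state in `Ĵ[A]`). -/
def HasWalkLen {N : ℕ} (A : Matrix (Fin N) (Fin N) ℝ) (i : Fin N) (m : ℕ) : Prop :=
  ∃ p : Fin (m + 1) → Fin N, p 0 = i ∧
    (∀ k : Fin m, A (p k.castSucc) (p k.succ) ≠ 0) ∧ ∑ j, A (p (Fin.last m)) j < 1

/-- Least length of a walk from `i` to `Ĵ[A]` (with `inf ∅ = ⊤`). -/
noncomputable def minWalkLen {N : ℕ} (A : Matrix (Fin N) (Fin N) ℝ) (i : Fin N) : ℕ∞ :=
  sInf {n : ℕ∞ | ∃ m : ℕ, n = (m : ℕ∞) ∧ HasWalkLen A i m}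

/-- The index of contraction `ĉon A` of a substochastic matrix: the supremum over
trouble states `i ∉ Ĵ[A]` of the least length of a walk from `i` to `Ĵ[A]`
(positive part being automatic since `sSup ∅ = 0` in `ℕ∞`). -/
noncomputable def conHat {N : ℕ} (A : Matrix (Fin N) (Fin N) ℝ) : ℕ∞ :=
  ⨆ i ∈ {i : Fin N | 1 ≤ ∑ j, A i j}, minWalkLen A i

/-- The `ℓ∞` operator norm: maximum absolute row sum. -/
noncomputable def linftyNorm {N : ℕ} (A : Matrix (Fin N) (Fin N) ℝ) : ℝ :=
  ⨆ i, ∑ j, |A i j|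

/-- Spectral radius of a real matrix, computed over the complex spectrum. -/
noncomputable def specRad {N : ℕ} (A : Matrix (Fin N) (Fin N) ℝ) : ℝ≥0∞ :=
  spectralRadius ℂ (A.map Complex.ofReal)

section Aux

variable {N : ℕ} {A : Matrix (Fin N) (Fin N) ℝ}

lemma pow_substochastic (hA : IsSubstochastic A) (m : ℕ) : IsSubstochastic (A ^ m) := by
  induction m with
  | zero =>
    refine ⟨fun i j => ?_, fun i => ?_⟩
    · simp only [pow_zero, Matrix.one_apply]
      split <;> norm_num
    · simp [pow_zero, Matrix.one_apply]
  | succ n ih =>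
    rw [pow_succ]
    refine ⟨fun i j => ?_, fun i => ?_⟩
    · rw [Matrix.mul_apply]
      exact Finset.sum_nonneg fun k _ => mul_nonneg (ih.1 i k) (hA.1 k j)
    · simp only [Matrix.mul_apply]
      rw [Finset.sum_comm]
      calc ∑ k, ∑ j, (A ^ n) i k * A k j = ∑ k, (A ^ n) i k * ∑ j, A k j := by
            simp [Finset.mul_sum]
        _ ≤ ∑ k, (A ^ n) i k * 1 :=
            Finset.sum_le_sum fun k _ => mul_le_mul_of_nonneg_left (hA.2 k) (ih.1 i k)
        _ ≤ 1 := by simpa using ih.2 i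

lemma hasWalkLen_zero_iff (i : Fin N) : HasWalkLen A i 0 ↔ ∑ j, A i j < 1 := by
  constructor
  · rintro ⟨p, hp0, -, hpl⟩
    have : Fin.last 0 = (0 : Fin 1) := rfl
    rwa [this, hp0] at hpl
  · intro h
    exact ⟨fun _ => i, rfl, fun k => k.elim0, h⟩

lemma hasWalkLen_succ_iff (i : Fin N) (m : ℕ) :
    HasWalkLen A i (m + 1) ↔ ∃ k, A i k ≠ 0 ∧ HasWalkLen A k m := by
  constructor
  · rintro ⟨p, hp0, hpe, hpl⟩
    refine ⟨p 1, ?_, p ∘ Fin.succ, rfl, fun k => ?_, ?_⟩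
    · have h0 := hpe 0
      rwa [Fin.castSucc_zero, Fin.succ_zero_eq_one, hp0] at h0
    · have h := hpe k.succ
      simp only [Function.comp_apply]
      rwa [← Fin.succ_castSucc] at h
    · simp only [Function.comp_apply, Fin.succ_last]
      exact hpl
  · rintro ⟨k, hik, q, hq0, hqe, hql⟩
    refine ⟨Fin.cons i q, Fin.cons_zero _ _, fun t => ?_, ?_⟩
    · induction t using Fin.cases with
      | zero =>
        rw [Fin.castSucc_zero, Fin.succ_zero_eq_one, Fin.cons_zero]
        have : (1 : Fin (m + 2)) = Fin.succ 0 := rfl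
        rw [this, Fin.cons_succ, hq0]
        exact hik
      | succ s =>
        rw [← Fin.succ_castSucc, Fin.cons_succ, Fin.cons_succ]
        exact hqe s
    · have : Fin.last (m + 1) = Fin.succ (Fin.last m) := (Fin.succ_last m).symm
      rw [this, Fin.cons_succ]
      exact hql

lemma sum_mul_lt_one_iff (hA : IsSubstochastic A) (i : Fin N) (f : Fin N → ℝ)
    (hf0 : ∀ k, 0 ≤ f k) (hf1 : ∀ k, f k ≤ 1) :
    ∑ k, A i k * f k < 1 ↔ (∑ j, A i j < 1 ∨ ∃ k, A i k ≠ 0 ∧ f k < 1) := by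
  constructor
  · intro h
    by_contra hc
    push_neg at hc
    obtain ⟨h1, h2⟩ := hc
    have hle : ∑ k, A i k ≤ ∑ k, A i k * f k := by
      refine Finset.sum_le_sum fun k _ => ?_
      by_cases hk : A i k = 0
      · simp [hk]
      · nlinarith [hA.1 i k, h2 k hk]
    linarith
  · rintro (h | ⟨k0, hk0, hfk0⟩)
    · calc ∑ k, A i k * f k ≤ ∑ k, A i k :=
            Finset.sum_le_sum fun k _ => by nlinarith [hA.1 i k, hf1 k, hf0 k]
        _ < 1 := h
    · have hk0' : 0 < A i k0 := lt_of_le_of_ne (hA.1 i k0) (Ne.symm hk0)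
      have hlt : ∑ k, A i k * f k < ∑ k, A i k * 1 := by
        refine Finset.sum_lt_sum (fun k _ => mul_le_mul_of_nonneg_left (hf1 k) (hA.1 i k))
          ⟨k0, Finset.mem_univ _, by nlinarith⟩
      calc ∑ k, A i k * f k < ∑ k, A i k * 1 := hlt
        _ ≤ 1 := by simpa using hA.2 i

lemma rowsum_pow_lt_iff (hA : IsSubstochastic A) (m : ℕ) (i : Fin N) :
    ∑ j, (A ^ (m + 1)) i j < 1 ↔ ∃ m' ≤ m, HasWalkLen A i m' := by
  induction m generalizing i with
  | zero =>
    rw [pow_one]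
    constructor
    · intro h; exact ⟨0, le_refl _, (hasWalkLen_zero_iff i).mpr h⟩
    · rintro ⟨m', hm', hw⟩
      interval_cases m'
      exact (hasWalkLen_zero_iff i).mp hw
  | succ n ih =>
    have hrec : ∑ j, (A ^ (n + 1 + 1)) i j = ∑ k, A i k * ∑ j, (A ^ (n + 1)) k j := by
      rw [pow_succ']
      simp only [Matrix.mul_apply]
      rw [Finset.sum_comm]
      simp [Finset.mul_sum]
    rw [hrec, sum_mul_lt_one_iff hA i _ (fun k => Finset.sum_nonneg fun j _ =>
      (pow_substochastic hA (n + 1)).1 k j) (fun k => (pow_substochastic hA (n + 1)).2 k)]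
    constructor
    · rintro (h | ⟨k, hk, hlt⟩)
      · exact ⟨0, Nat.zero_le _, (hasWalkLen_zero_iff i).mpr h⟩
      · obtain ⟨m', hm', hw⟩ := (ih k).mp hlt
        exact ⟨m' + 1, by omega, (hasWalkLen_succ_iff i m').mpr ⟨k, hk, hw⟩⟩
    · rintro ⟨m', hm', hw⟩
      cases m' with
      | zero => exact Or.inl ((hasWalkLen_zero_iff i).mp hw)
      | succ t =>
        obtain ⟨k, hk, hw'⟩ := (hasWalkLen_succ_iff i t).mp hw
        exact Or.inr ⟨k, hk, (ih k).mpr ⟨t, by omega, hw'⟩⟩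

lemma minWalkLen_le_iff (i : Fin N) (m : ℕ) :
    minWalkLen A i ≤ (m : ℕ∞) ↔ ∃ m' ≤ m, HasWalkLen A i m' := by
  constructor
  · intro h
    have hne : {n : ℕ∞ | ∃ m : ℕ, n = (m : ℕ∞) ∧ HasWalkLen A i m}.Nonempty := by
      by_contra h'
      rw [Set.not_nonempty_iff_eq_empty] at h'
      rw [minWalkLen, h', sInf_empty] at h
      exact absurd h (by simp)
    obtain ⟨m', heq, hw⟩ := csInf_mem hne
    rw [minWalkLen, heq, Nat.cast_le] at h
    exact ⟨m', h, hw⟩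
  · rintro ⟨m', hm', hw⟩
    refine le_trans (sInf_le ⟨m', rfl, hw⟩) ?_
    exact_mod_cast hm'

lemma conHat_le_iff (hA : IsSubstochastic A) (m : ℕ) :
    conHat A ≤ (m : ℕ∞) ↔ ∀ i, ∃ m' ≤ m, HasWalkLen A i m' := by
  rw [conHat, iSup₂_le_iff]
  constructor
  · intro h i
    by_cases hi : 1 ≤ ∑ j, A i j
    · exact (minWalkLen_le_iff i m).mp (h i hi)
    · exact ⟨0, Nat.zero_le _, (hasWalkLen_zero_iff i).mpr (lt_of_not_ge hi)⟩
  · intro h i _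
    exact (minWalkLen_le_iff i m).mpr (h i)

lemma linftyNorm_lt_one_iff (M : Matrix (Fin N) (Fin N) ℝ) :
    linftyNorm M < 1 ↔ ∀ i, ∑ j, |M i j| < 1 := by
  rcases Nat.eq_zero_or_pos N with h | h
  · subst h
    constructor
    · intro _ i; exact i.elim0
    · intro _
      rw [linftyNorm, Real.iSup_of_isEmpty]
      norm_num
  · haveI : Nonempty (Fin N) := Fin.pos_iff_nonempty.mp h
    constructor
    · intro hM i
      exact (le_ciSup (Set.Finite.bddAbove (Set.finite_range _)) i).trans_lt hM
    · intro hM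
      obtain ⟨i0, hi0⟩ := Finite.exists_max (fun i => ∑ j, |M i j|)
      exact (ciSup_le hi0).trans_lt (hM i0)

lemma linftyNorm_pow_lt_one_iff (hA : IsSubstochastic A) (m : ℕ) :
    linftyNorm (A ^ (m + 1)) < 1 ↔ conHat A ≤ (m : ℕ∞) := by
  rw [linftyNorm_lt_one_iff, conHat_le_iff hA]
  have habs : ∀ i j, |(A ^ (m + 1)) i j| = (A ^ (m + 1)) i j := fun i j =>
    abs_of_nonneg ((pow_substochastic hA (m + 1)).1 i j)
  simp only [habs]
  exact forall_congr' fun i => rowsum_pow_lt_iff hA m i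

end Aux

section Spectral

attribute [local instance] Matrix.linftyOpNormedRing Matrix.linftyOpNormedAlgebra

variable {N : ℕ} {A : Matrix (Fin N) (Fin N) ℝ}

lemma map_ofReal_pow (A : Matrix (Fin N) (Fin N) ℝ) (n : ℕ) :
    (A.map Complex.ofReal) ^ n = (A ^ n).map Complex.ofReal := by
  have h := map_pow (Complex.ofRealHom.mapMatrix (m := Fin N)) A n
  simp only [RingHom.mapMatrix_apply] at h
  exact h.symm

lemma norm_map_lt_one_iff (M : Matrix (Fin N) (Fin N) ℝ) :
    ‖M.map Complex.ofReal‖ < 1 ↔ ∀ i, ∑ j, |M i j| < 1 := by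
  rw [Matrix.linfty_opNorm_def]
  have hcast : ∀ i, ((∑ j, ‖(M.map Complex.ofReal) i j‖₊ : ℝ≥0) : ℝ) = ∑ j, |M i j| := by
    intro i
    push_cast
    refine Finset.sum_congr rfl fun j _ => ?_
    simp [Matrix.map_apply, Complex.norm_real, Real.norm_eq_abs]
  constructor
  · intro h i
    rw [← hcast i]
    have : (∑ j, ‖(M.map Complex.ofReal) i j‖₊ : ℝ≥0)
        ≤ (Finset.univ : Finset (Fin N)).sup fun i => ∑ j, ‖(M.map Complex.ofReal) i j‖₊ :=
      Finset.le_sup (f := fun i => ∑ j, ‖(M.map Complex.ofReal) i j‖₊) (Finset.mem_univ i)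
    calc ((∑ j, ‖(M.map Complex.ofReal) i j‖₊ : ℝ≥0) : ℝ) ≤ _ := by exact_mod_cast this
      _ < 1 := h
  · intro h
    have : ((Finset.univ : Finset (Fin N)).sup fun i => ∑ j, ‖(M.map Complex.ofReal) i j‖₊)
        < (1 : ℝ≥0) := by
      rw [Finset.sup_lt_iff (by norm_num : (⊥ : ℝ≥0) < 1)]
      intro i _
      have := h i
      rw [← hcast i] at this
      exact_mod_cast this
    exact_mod_cast this

lemma specRad_lt_one_of_norm (m : ℕ) (h : ∀ i, ∑ j, |(A ^ (m + 1)) i j| < 1) :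
    specRad A < 1 := by
  rcases Nat.eq_zero_or_pos N with hN | hN
  · subst hN
    haveI : Subsingleton (Matrix (Fin 0) (Fin 0) ℂ) :=
      ⟨fun a b => by ext i j; exact i.elim0⟩
    have hspec : spectrum ℂ (A.map Complex.ofReal) = ∅ := by
      ext k
      simp only [Set.mem_empty_iff_false, iff_false, spectrum.mem_iff, not_not]
      exact isUnit_of_subsingleton _
    rw [specRad, spectralRadius, hspec]
    simp
  · haveI : Nonempty (Fin N) := Fin.pos_iff_nonempty.mp hN
    set B := A.map Complex.ofReal with hB
    have hn : ‖B ^ (m + 1)‖ < 1 := by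
      rw [hB, map_ofReal_pow]
      exact (norm_map_lt_one_iff _).mpr h
    have hle := spectrum.spectralRadius_le_pow_nnnorm_pow_one_div ℂ B m
    have h1 : (‖(1 : Matrix (Fin N) (Fin N) ℂ)‖₊ : ℝ≥0∞) = 1 := by
      rw [nnnorm_one]; simp
    rw [h1, ENNReal.one_rpow, mul_one] at hle
    refine lt_of_le_of_lt hle ?_
    have h2 : ‖B ^ (m + 1)‖₊ < 1 := by
      rw [← NNReal.coe_lt_coe, coe_nnnorm]
      simpa using hn
    have hnn : (‖B ^ (m + 1)‖₊ : ℝ≥0∞) < 1 := by exact_mod_cast h2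
    exact ENNReal.rpow_lt_one hnn (by positivity)

lemma norm_of_specRad_lt_one (h : specRad A < 1) :
    ∃ m : ℕ, ∀ i, ∑ j, |(A ^ (m + 1)) i j| < 1 := by
  set B := A.map Complex.ofReal with hB
  have htend := spectrum.pow_nnnorm_pow_one_div_tendsto_nhds_spectralRadius B
  have hev := htend.eventually_lt_const h
  obtain ⟨a, ha⟩ := Filter.eventually_atTop.mp hev
  have hfin : ((‖B ^ (a + 1)‖₊ : ℝ≥0∞)) ^ (1 / ((a : ℝ) + 1)) < 1 := by
    have := ha (a + 1) (by omega)
    simpa using this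
  have hlt : (‖B ^ (a + 1)‖₊ : ℝ≥0∞) < 1 := by
    by_contra hc
    push_neg at hc
    have : (1 : ℝ≥0∞) ≤ ((‖B ^ (a + 1)‖₊ : ℝ≥0∞)) ^ (1 / ((a : ℝ) + 1)) := by
      calc (1 : ℝ≥0∞) = (1 : ℝ≥0∞) ^ (1 / ((a : ℝ) + 1)) := (ENNReal.one_rpow _).symm
        _ ≤ _ := ENNReal.rpow_le_rpow hc (by positivity)
    exact absurd hfin (not_lt.mpr this)
  refine ⟨a, ?_⟩
  have h2 : ‖B ^ (a + 1)‖₊ < 1 := by exact_mod_cast hlt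
  have : ‖B ^ (a + 1)‖ < 1 := by
    rw [← coe_nnnorm]
    exact_mod_cast h2
  rw [hB, map_ofReal_pow] at this
  exact (norm_map_lt_one_iff _).mp this

end Spectral

/-- For a substochastic matrix `A`, the index of contraction equals the infimum of
all `n` with `‖A^(n+1)‖_∞ < 1`; in particular it is finite iff `ρ(A) < 1`. -/
theorem conHat_eq_inf_norm_lt_one {N : ℕ} (A : Matrix (Fin N) (Fin N) ℝ)
    (hA : IsSubstochastic A) :
    conHat A = sInf {n : ℕ∞ | ∃ m : ℕ, n = (m : ℕ∞) ∧ linftyNorm (A ^ (m + 1)) < 1} ∧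
    (conHat A < ⊤ ↔ specRad A < 1) := by
  have hset : ∀ m : ℕ, linftyNorm (A ^ (m + 1)) < 1 ↔ conHat A ≤ (m : ℕ∞) :=
    linftyNorm_pow_lt_one_iff hA
  constructor
  · apply le_antisymm
    · refine le_sInf fun n hn => ?_
      obtain ⟨m, rfl, hm⟩ := hn
      exact (hset m).mp hm
    · rcases eq_or_ne (conHat A) ⊤ with h | h
      · rw [h]
        exact le_top
      · obtain ⟨k, hk⟩ := (WithTop.ne_top_iff_exists.mp h)
        exact sInf_le (show conHat A ∈
          {n : ℕ∞ | ∃ m : ℕ, n = (m : ℕ∞) ∧ linftyNorm (A ^ (m + 1)) < 1} from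
          ⟨k, hk.symm, (hset k).mpr hk.ge⟩)
  · constructor
    · intro h
      obtain ⟨k, hk⟩ := WithTop.ne_top_iff_exists.mp h.ne
      have := (hset k).mpr hk.ge
      rw [linftyNorm_lt_one_iff] at this
      exact specRad_lt_one_of_norm k this
    · intro h
      obtain ⟨m, hm⟩ := norm_of_specRad_lt_one h
      have : conHat A ≤ (m : ℕ∞) := (hset m).mp ((linftyNorm_lt_one_iff _).mpr hm)
      exact lt_of_le_of_lt this (by simp [lt_top_iff_ne_top])
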